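/- Let γ ∈ (1/2, 1] and define f(x) := γ·sin x − 2(1−γ)·sin(x/2). Then: (1) f(0) = 0, f(2·arccos((1−γ)/γ)) = 0, and f(x) > 0 for all x in the open interval (0, 2·arccos((1−γ)/γ)); (2) f is strictly concave on (0, 2·arccos((1−γ)/γ)) (i.e., f''(x) < 0 there), and f attains its maximum over this interval at the unique critical point θ* := 2·arccos((1−γ+√((1−γ)²+8γ²))/(4γ)), which is the unique solution of f'(x) = 0 in (0, 2·arccos((1−γ)/γ)). -/

import Mathlib

open Real Set

set_option maxHeartbeats 1000000 in
/-- Properties of `f(x) = γ sin x − 2(1−γ) sin(x/2)` for `γ ∈ (1/2, 1]` (Lemma 4.2):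
zeros, positivity, strict concavity (with `f'' < 0`) on `(0, 2 arccos((1−γ)/γ))`,
and the unique interior critical point `θ* = 2 arccos((1−γ+√((1−γ)²+8γ²))/(4γ))`,
at which `f` attains its maximum over the interval. -/
theorem kuramoto_coupling_function_properties (γ : ℝ) (hγ₁ : 1 / 2 < γ) (hγ₂ : γ ≤ 1)
    (f : ℝ → ℝ) (hf : ∀ x, f x = γ * Real.sin x - 2 * (1 - γ) * Real.sin (x / 2))
    (θs : ℝ)
    (hθs : θs = 2 * Real.arccos ((1 - γ + Real.sqrt ((1 - γ) ^ 2 + 8 * γ ^ 2)) / (4 * γ))) :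
    -- (1) zeros and positivity
    (f 0 = 0 ∧ f (2 * Real.arccos ((1 - γ) / γ)) = 0 ∧
      ∀ x ∈ Set.Ioo 0 (2 * Real.arccos ((1 - γ) / γ)), 0 < f x) ∧
    -- (2) strict concavity, f'' < 0, and the maximum at the unique critical point θ*
    (StrictConcaveOn ℝ (Set.Ioo 0 (2 * Real.arccos ((1 - γ) / γ))) f ∧
      (∀ x ∈ Set.Ioo 0 (2 * Real.arccos ((1 - γ) / γ)), iteratedDeriv 2 f x < 0) ∧
      θs ∈ Set.Ioo 0 (2 * Real.arccos ((1 - γ) / γ)) ∧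
      deriv f θs = 0 ∧
      (∀ x ∈ Set.Ioo 0 (2 * Real.arccos ((1 - γ) / γ)), deriv f x = 0 → x = θs) ∧
      (∀ x ∈ Set.Ioo 0 (2 * Real.arccos ((1 - γ) / γ)), f x ≤ f θs)) := by
  have hγ0 : (0:ℝ) < γ := by linarith
  set c : ℝ := (1 - γ) / γ with hc
  set A : ℝ := 2 * Real.arccos c with hA
  -- basic facts about c
  have hc0 : 0 ≤ c := div_nonneg (by linarith) hγ0.le
  have hc1 : c < 1 := by
    rw [div_lt_one hγ0]; linarith
  have hcm1 : (-1:ℝ) ≤ c := by linarith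
  have hγc : γ * c = 1 - γ := by rw [hc]; field_simp
  -- facts about sqrt
  set s : ℝ := Real.sqrt ((1 - γ) ^ 2 + 8 * γ ^ 2) with hs
  have hs0 : 0 < s := Real.sqrt_pos.2 (by nlinarith)
  have hs2 : s ^ 2 = (1 - γ) ^ 2 + 8 * γ ^ 2 := Real.sq_sqrt (by nlinarith)
  set u : ℝ := (1 - γ + s) / (4 * γ) with hu
  have hu0 : 0 < u := div_pos (by linarith) (by linarith)
  have hu1 : u < 1 := by
    rw [div_lt_one (by linarith)]
    nlinarith [hs2, hs0]
  have hcu : c < u := by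
    rw [hc, hu, div_lt_div_iff₀ hγ0 (by linarith)]
    nlinarith [hs2, hs0]
  -- the quadratic identity for u
  have hquad : 2 * γ * u ^ 2 - (1 - γ) * u - γ = 0 := by
    rw [hu]
    field_simp
    nlinarith [hs2]
  -- interval facts
  have harc_c_pi : Real.arccos c ≤ π / 2 := Real.arccos_le_pi_div_two.2 hc0
  have hpi : 0 < π := Real.pi_pos
  have hmem : ∀ x ∈ Set.Ioo 0 A, 0 < Real.sin (x / 2) ∧ c < Real.cos (x / 2) := by
    intro x hx
    obtain ⟨hx0, hxA⟩ := hx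
    have h1 : x / 2 < Real.arccos c := by rw [hA] at hxA; linarith
    have h2 : 0 < x / 2 := by linarith
    constructor
    · exact Real.sin_pos_of_pos_of_lt_pi h2 (by linarith)
    · have := Real.cos_lt_cos_of_nonneg_of_le_pi h2.le (by linarith) h1
      rwa [Real.cos_arccos hcm1 hc1.le] at this
  -- factorization of f
  have hfact : ∀ x, f x = 2 * Real.sin (x / 2) * (γ * Real.cos (x / 2) - (1 - γ)) := by
    intro x
    have h2 : Real.sin (2 * (x / 2)) = 2 * Real.sin (x / 2) * Real.cos (x / 2) :=
      Real.sin_two_mul (x / 2)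
    rw [show 2 * (x / 2) = x by ring] at h2
    rw [hf, h2]; ring
  -- first derivative
  have hd1 : ∀ x, HasDerivAt f (γ * Real.cos x - (1 - γ) * Real.cos (x / 2)) x := by
    intro x
    have hfeq : f = fun x => γ * Real.sin x - 2 * (1 - γ) * Real.sin (x / 2) := funext hf
    rw [hfeq]
    have hhalf : HasDerivAt (fun y : ℝ => y / 2) (1 / 2) x := by
      simpa using (hasDerivAt_id x).div_const 2
    have hsin2 : HasDerivAt (fun y : ℝ => Real.sin (y / 2)) (Real.cos (x / 2) * (1 / 2)) x :=
      (Real.hasDerivAt_sin (x / 2)).comp (h := fun y : ℝ => y / 2) x hhalf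
    have := ((Real.hasDerivAt_sin x).const_mul γ).sub (hsin2.const_mul (2 * (1 - γ)))
    exact this.congr_deriv (by ring)
  have hderiv : deriv f = fun x => γ * Real.cos x - (1 - γ) * Real.cos (x / 2) :=
    funext fun x => (hd1 x).deriv
  -- second derivative
  have hd2 : ∀ x, HasDerivAt (deriv f)
      (-(γ * Real.sin x) + (1 - γ) * (Real.sin (x / 2) * (1 / 2))) x := by
    intro x
    rw [hderiv]
    have hhalf : HasDerivAt (fun y : ℝ => y / 2) (1 / 2) x := by
      simpa using (hasDerivAt_id x).div_const 2
    have hcos2 : HasDerivAt (fun y : ℝ => Real.cos (y / 2)) (-Real.sin (x / 2) * (1 / 2)) x :=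
      (Real.hasDerivAt_cos (x / 2)).comp (h := fun y : ℝ => y / 2) x hhalf
    have := ((Real.hasDerivAt_cos x).const_mul γ).sub (hcos2.const_mul (1 - γ))
    exact this.congr_deriv (by ring)
  have hderiv2 : deriv (deriv f) = fun x =>
      -(γ * Real.sin x) + (1 - γ) * (Real.sin (x / 2) * (1 / 2)) :=
    funext fun x => (hd2 x).deriv
  -- f'' < 0 on Ioo 0 A
  have hf''neg : ∀ x ∈ Set.Ioo 0 A, deriv (deriv f) x < 0 := by
    intro x hx
    obtain ⟨hsinp, hcosc⟩ := hmem x hx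
    rw [hderiv2]
    have h2 : Real.sin (2 * (x / 2)) = 2 * Real.sin (x / 2) * Real.cos (x / 2) :=
      Real.sin_two_mul (x / 2)
    rw [show 2 * (x / 2) = x by ring] at h2
    simp only [h2]
    have hγcos : γ * Real.cos (x / 2) > 1 - γ := by
      calc 1 - γ = γ * c := hγc.symm
      _ < γ * Real.cos (x / 2) := by exact (mul_lt_mul_iff_right₀ hγ0).2 hcosc
    nlinarith [hsinp]
  -- continuity of f and deriv f
  have hfc : Continuous f := by
    rw [funext hf]; fun_prop
  have hdc : Continuous (deriv f) := by
    rw [hderiv]; fun_prop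
  -- strict antitonicity of deriv f on Ioo 0 A
  have hAnti : StrictAntiOn (deriv f) (Set.Ioo 0 A) := by
    apply strictAntiOn_of_deriv_neg (convex_Ioo _ _) hdc.continuousOn
    intro x hx
    rw [interior_Ioo] at hx
    exact hf''neg x hx
  -- θs facts
  have hθs2 : θs / 2 = Real.arccos u := by rw [hθs]; ring
  have hcosθs : Real.cos (θs / 2) = u := by
    rw [hθs2, Real.cos_arccos (by linarith) hu1.le]
  have hθsmem : θs ∈ Set.Ioo 0 A := by
    constructor
    · rw [hθs]
      have := Real.arccos_pos.2 hu1
      linarith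
    · rw [hθs, hA]
      have := Real.strictAntiOn_arccos ⟨hcm1, hc1.le⟩ ⟨by linarith, hu1.le⟩ hcu
      linarith
  have hderivθs : deriv f θs = 0 := by
    rw [hderiv]
    have hcos2 : Real.cos (2 * (θs / 2)) = 2 * Real.cos (θs / 2) ^ 2 - 1 :=
      Real.cos_two_mul (θs / 2)
    rw [show 2 * (θs / 2) = θs by ring] at hcos2
    simp only [hcos2, hcosθs]
    linear_combination hquad
  -- zeros and positivity
  have hf0 : f 0 = 0 := by rw [hfact]; simp
  have hfA : f A = 0 := by
    rw [hfact]
    have : A / 2 = Real.arccos c := by rw [hA]; ring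
    rw [this, Real.cos_arccos hcm1 hc1.le, hγc]
    ring
  have hfpos : ∀ x ∈ Set.Ioo 0 A, 0 < f x := by
    intro x hx
    obtain ⟨hsinp, hcosc⟩ := hmem x hx
    rw [hfact]
    have hpos : γ * Real.cos (x / 2) - (1 - γ) > 0 := by
      rw [← hγc]
      have := mul_lt_mul_of_pos_left hcosc hγ0
      linarith
    exact mul_pos (mul_pos two_pos hsinp) hpos
  -- strict concavity
  have hconc : StrictConcaveOn ℝ (Set.Ioo 0 A) f := by
    apply strictConcaveOn_of_deriv2_neg (convex_Ioo _ _) hfc.continuousOn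
    intro x hx
    rw [interior_Ioo] at hx
    exact hf''neg x hx
  -- sign of deriv f around θs
  have hdpos : ∀ x ∈ Set.Ioo 0 A, x < θs → 0 < deriv f x := by
    intro x hx hlt
    have := hAnti hx hθsmem hlt
    rw [hderivθs] at this
    exact this
  have hdneg : ∀ x ∈ Set.Ioo 0 A, θs < x → deriv f x < 0 := by
    intro x hx hlt
    have := hAnti hθsmem hx hlt
    rw [hderivθs] at this
    exact this
  -- maximum
  have hmax : ∀ x ∈ Set.Ioo 0 A, f x ≤ f θs := by
    intro x hx
    rcases lt_trichotomy x θs with h | h | h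
    · have hmono : StrictMonoOn f (Set.Icc x θs) := by
        apply strictMonoOn_of_deriv_pos (convex_Icc _ _) hfc.continuousOn
        intro y hy
        rw [interior_Icc] at hy
        exact hdpos y ⟨lt_trans hx.1 hy.1, lt_trans hy.2 hθsmem.2⟩ hy.2
      exact (hmono ⟨le_refl x, h.le⟩ ⟨h.le, le_refl θs⟩ h).le
    · rw [h]
    · have hmono : StrictAntiOn f (Set.Icc θs x) := by
        apply strictAntiOn_of_deriv_neg (convex_Icc _ _) hfc.continuousOn
        intro y hy
        rw [interior_Icc] at hy
        exact hdneg y ⟨lt_trans hθsmem.1 hy.1, lt_trans hy.2 hx.2⟩ hy.1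
      exact (hmono ⟨le_refl θs, h.le⟩ ⟨h.le, le_refl x⟩ h).le
  refine ⟨⟨hf0, hfA, hfpos⟩, hconc, ?_, hθsmem, hderivθs, ?_, hmax⟩
  · intro x hx
    rw [show (2:ℕ) = 1 + 1 from rfl, iteratedDeriv_succ, iteratedDeriv_one]
    exact hf''neg x hx
  · intro x hx hdx
    by_contra hne
    rcases lt_or_gt_of_ne hne with h | h
    · have := hdpos x hx h; rw [hdx] at this; exact lt_irrefl 0 this
    · have := hdneg x hx h; rw [hdx] at this; exact lt_irrefl 0 this
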